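/- Let a > 0 and c > 0, let g(z) = a·(φ(z) − z·Φᶜ(z)) − c, let z* be the unique zero of g, and let w(z) = (a·φ(z) − c)/Φᶜ(z). Then the following are equivalent: (i) z* > 0; (ii) w(z*) > 0; (iii) c < a/√(2π). -/

import Mathlib

open MeasureTheory ProbabilityTheory Real

/-- Standard normal density. -/
noncomputable def stdPdf (x : ℝ) : ℝ := (Real.sqrt (2 * Real.pi))⁻¹ * Real.exp (-(x ^ 2) / 2)

/-- Standard normal CDF. -/
noncomputable def stdCdf (x : ℝ) : ℝ := ∫ u in Set.Iic x, stdPdf u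

/-- Standard normal complementary CDF. -/
noncomputable def stdCcdf (x : ℝ) : ℝ := 1 - stdCdf x


lemma stdPdf_pos (x : ℝ) : 0 < stdPdf x := by
  unfold stdPdf
  positivity

lemma stdPdf_cont : Continuous stdPdf := by
  unfold stdPdf; fun_prop

lemma stdPdf_integrable : Integrable stdPdf := by
  have h : Integrable fun x : ℝ => Real.exp (-(1/2 : ℝ) * x ^ 2) :=
    integrable_exp_neg_mul_sq (by norm_num)
  have := h.const_mul (Real.sqrt (2 * Real.pi))⁻¹
  refine this.congr (Filter.Eventually.of_forall fun x => ?_)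
  unfold stdPdf; ring_nf

lemma stdPdf_total : ∫ x, stdPdf x = 1 := by
  have h := integral_gaussian (1/2 : ℝ)
  have h2 : (∫ x : ℝ, stdPdf x) = (Real.sqrt (2 * Real.pi))⁻¹ * ∫ x : ℝ, Real.exp (-(1/2:ℝ) * x ^ 2) := by
    rw [← integral_const_mul]
    congr 1; ext x; unfold stdPdf; ring_nf
  rw [h2, h]
  have : Real.pi / (1/2 : ℝ) = 2 * Real.pi := by ring
  rw [this, inv_mul_cancel₀ (by positivity)]

lemma stdCcdf_eq (x : ℝ) : stdCcdf x = ∫ u in Set.Ioi x, stdPdf u := by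
  have := intervalIntegral.integral_Iic_add_Ioi (b := x) (f := stdPdf) (μ := volume)
    stdPdf_integrable.integrableOn stdPdf_integrable.integrableOn
  unfold stdCcdf stdCdf
  rw [← stdPdf_total, ← this]; ring

lemma stdCcdf_pos (x : ℝ) : 0 < stdCcdf x := by
  rw [stdCcdf_eq]
  rw [setIntegral_pos_iff_support_of_nonneg_ae]
  · have : Function.support stdPdf = Set.univ := by
      ext y; simp [Function.mem_support, (stdPdf_pos y).ne']
    rw [this, Set.univ_inter]
    simp
  · exact Filter.Eventually.of_forall fun y => (stdPdf_pos y).le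
  · exact stdPdf_integrable.integrableOn

lemma stdCdf_hasDeriv (x : ℝ) : HasDerivAt stdCdf (stdPdf x) x := by
  have key : ∀ y : ℝ, stdCdf y = stdCdf 0 + ∫ u in (0:ℝ)..y, stdPdf u := by
    intro y
    unfold stdCdf
    rw [← intervalIntegral.integral_Iic_sub_Iic stdPdf_integrable.integrableOn
      stdPdf_integrable.integrableOn]
    ring
  have h : HasDerivAt (fun y => stdCdf 0 + ∫ u in (0:ℝ)..y, stdPdf u) (stdPdf x) x := by
    have := intervalIntegral.integral_hasDerivAt_right
      (stdPdf_integrable.intervalIntegrable (a:=0) (b:=x))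
      (stdPdf_cont.stronglyMeasurable.stronglyMeasurableAtFilter)
      (stdPdf_cont.continuousAt)
    exact (this.const_add (stdCdf 0))
  exact h.congr_of_eventuallyEq (Filter.Eventually.of_forall fun y => (key y))

lemma stdPdf_hasDeriv (x : ℝ) : HasDerivAt stdPdf (-x * stdPdf x) x := by
  have h1 : HasDerivAt (fun y : ℝ => -(y ^ 2) / 2) (-x) x := by
    have : HasDerivAt (fun y : ℝ => y ^ 2) (2 * x) x := by
      simpa using (hasDerivAt_pow 2 x)
    have := ((this.neg).div_const 2)
    simpa using this.congr_deriv (by ring)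
  have h2 := (Real.hasDerivAt_exp (-(x^2)/2)).comp x h1
  have := h2.const_mul (Real.sqrt (2 * Real.pi))⁻¹
  unfold stdPdf
  exact this.congr_deriv (by ring)

/-- Standard normal hazard rate. -/
noncomputable def hazard (x : ℝ) : ℝ := stdPdf x / stdCcdf x

lemma stdCcdf_hasDeriv (x : ℝ) : HasDerivAt stdCcdf (-stdPdf x) x := by
  have := (stdCdf_hasDeriv x).const_sub 1
  exact this

lemma hfun_strictAnti : StrictAnti (fun z => stdPdf z - z * stdCcdf z) := by
  apply strictAnti_of_deriv_neg
  intro x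
  have h1 : HasDerivAt (fun z => stdPdf z - z * stdCcdf z) (-stdCcdf x) x := by
    have h2 := ((hasDerivAt_id x).mul (stdCcdf_hasDeriv x))
    have h3 := (stdPdf_hasDeriv x).sub h2
    exact h3.congr_deriv (by simp only [id_eq]; ring)
  rw [h1.deriv]
  simpa using stdCcdf_pos x

/-- Viability of the non-delegated selection process. If `z*` is the (unique) zero of
`g(z) = a·(φ(z) − z·Φᶜ(z)) − c`, then the following are equivalent: (i) `z* > 0`;
(ii) the optimal per-hire net utility `w(z*) = (a·φ(z*) − c)/Φᶜ(z*)` is positive;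
(iii) `c < a/√(2π)`. -/
theorem viability_equivalences (a c zstar : ℝ) (ha : 0 < a) (hc : 0 < c)
    (hz : a * (stdPdf zstar - zstar * stdCcdf zstar) - c = 0) :
    (0 < zstar ↔ 0 < (a * stdPdf zstar - c) / stdCcdf zstar) ∧
    (0 < zstar ↔ c < a / Real.sqrt (2 * Real.pi)) := by
  have hcc := stdCcdf_pos zstar
  constructor
  · have hnum : a * stdPdf zstar - c = a * zstar * stdCcdf zstar := by nlinarith [hz]
    rw [hnum, mul_div_assoc, div_self hcc.ne', mul_one]
    constructor
    · intro h; positivity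
    · intro h
      by_contra hle
      push_neg at hle
      nlinarith
  · have h0 : stdPdf 0 - (0:ℝ) * stdCcdf 0 = (Real.sqrt (2 * Real.pi))⁻¹ := by
      simp [stdPdf]
    have hs : (0:ℝ) < Real.sqrt (2 * Real.pi) := by positivity
    have hiff : 0 < zstar ↔ (stdPdf zstar - zstar * stdCcdf zstar) < (Real.sqrt (2 * Real.pi))⁻¹ := by
      rw [← h0]
      exact ⟨fun h => hfun_strictAnti h, fun h => hfun_strictAnti.lt_iff_gt.mp h⟩
    rw [hiff]
    rw [div_eq_mul_inv]
    constructor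
    · intro h; nlinarith
    · intro h; nlinarith
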